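/- Let 1/2 < γ < 1. There is a constant C (depending only on γ) such that for all positive integers a, b, the sum over positive integers x of x^{-γ}(x+a)^{-γ}(x+b)^{1-2γ} is at most C · (ab)^{1-2γ}. -/

import Mathlib

open Finset

/-- Bernoulli-type key inequality: for `0 ≤ p ≤ 1` and `1 ≤ m`,
`(m-1)^p ≤ m^(p-1) * (m - p)`. -/
private lemma bern_key {p m : ℝ} (hp0 : 0 ≤ p) (hp1 : p ≤ 1) (hm : 1 ≤ m) :
    (m - 1) ^ p ≤ m ^ (p - 1) * (m - p) := by
  have hm0 : (0 : ℝ) < m := lt_of_lt_of_le one_pos hm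
  have h1m : 1 / m ≤ 1 := div_le_one_of_le₀ hm hm0.le
  have h1 : m - 1 = m * (1 + (-1 / m)) := by field_simp; ring
  have hs : (-1 : ℝ) ≤ -1 / m := by rw [neg_div]; linarith
  have hb : (1 + (-1 / m)) ^ p ≤ 1 + p * (-1 / m) :=
    rpow_one_add_le_one_add_mul_self hs hp0 hp1
  have h2 : (0 : ℝ) ≤ 1 + (-1 / m) := by rw [neg_div]; linarith
  have h3 : 1 + p * (-1 / m) = (m - p) / m := by field_simp; ring
  calc (m - 1) ^ p = m ^ p * (1 + (-1 / m)) ^ p := by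
        rw [← Real.mul_rpow hm0.le h2, ← h1]
    _ ≤ m ^ p * (1 + p * (-1 / m)) := by
        exact mul_le_mul_of_nonneg_left hb (Real.rpow_nonneg hm0.le p)
    _ = m ^ (p - 1) * (m - p) := by
        rw [h3, Real.rpow_sub hm0, Real.rpow_one]
        ring

/-- Partial sums of `(i+1)^(-γ)` are bounded by `n^(1-γ)/(1-γ)`. -/
private lemma head_sum {γ : ℝ} (h0 : 0 < γ) (h1 : γ < 1) (n : ℕ) :
    ∑ i ∈ range n, ((i : ℝ) + 1) ^ (-γ) ≤ (n : ℝ) ^ (1 - γ) / (1 - γ) := by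
  have hc : (0 : ℝ) < 1 - γ := by linarith
  induction n with
  | zero => simp [Real.zero_rpow (by linarith : (1 : ℝ) - γ ≠ 0)]
  | succ n ih =>
    have hn0 : (0 : ℝ) ≤ (n : ℝ) := Nat.cast_nonneg n
    have hm : (1 : ℝ) ≤ (n : ℝ) + 1 := by linarith
    have key := bern_key (p := 1 - γ) (m := (n : ℝ) + 1) hc.le (by linarith) hm
    have hkey : (n : ℝ) ^ (1 - γ) ≤ ((n : ℝ) + 1) ^ (-γ) * ((n : ℝ) + γ) := by
      have e1 : (n : ℝ) + 1 - 1 = (n : ℝ) := by ring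
      have e2 : (1 : ℝ) - γ - 1 = -γ := by ring
      have e3 : (n : ℝ) + 1 - (1 - γ) = (n : ℝ) + γ := by ring
      rw [e1, e2, e3] at key; exact key
    have hsplit : ((n : ℝ) + 1) ^ (1 - γ) = ((n : ℝ) + 1) ^ (-γ) * ((n : ℝ) + 1) := by
      have e : (1 : ℝ) - γ = -γ + 1 := by ring
      rw [e, Real.rpow_add (by linarith), Real.rpow_one]
    have H : (n : ℝ) ^ (1 - γ) + (1 - γ) * ((n : ℝ) + 1) ^ (-γ)
        ≤ ((n : ℝ) + 1) ^ (1 - γ) := by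
      rw [hsplit]; nlinarith [hkey]
    rw [Finset.sum_range_succ]
    push_cast
    calc (∑ i ∈ range n, ((i : ℝ) + 1) ^ (-γ)) + ((n : ℝ) + 1) ^ (-γ)
        ≤ (n : ℝ) ^ (1 - γ) / (1 - γ) + ((n : ℝ) + 1) ^ (-γ) := by linarith
      _ = ((n : ℝ) ^ (1 - γ) + (1 - γ) * ((n : ℝ) + 1) ^ (-γ)) / (1 - γ) := by
          field_simp
      _ ≤ ((n : ℝ) + 1) ^ (1 - γ) / (1 - γ) := by gcongr

/-- Tail sum bound: `∑' i, (i+a+1)^(-δ) ≤ a^(1-δ)/(δ-1)` for `1 < δ ≤ 2`, `1 ≤ a`. -/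
private lemma tail_sum {δ : ℝ} (h1 : 1 < δ) (h2 : δ ≤ 2) {a : ℕ} (ha : 1 ≤ a) :
    ∑' i : ℕ, ((i : ℝ) + a + 1) ^ (-δ) ≤ (a : ℝ) ^ (1 - δ) / (δ - 1) := by
  set p : ℝ := δ - 1 with hp
  have hp0 : 0 < p := by rw [hp]; linarith
  have hp1 : p ≤ 1 := by rw [hp]; linarith
  have ha1 : (1 : ℝ) ≤ (a : ℝ) := by exact_mod_cast ha
  have hdpos : (0 : ℝ) < δ - 1 := by linarith
  -- termwise bound by a telescoping difference
  have term : ∀ i : ℕ, ((i : ℝ) + a + 1) ^ (-δ)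
      ≤ (((i : ℝ) + a) ^ (1 - δ) - ((i : ℝ) + a + 1) ^ (1 - δ)) / (δ - 1) := by
    intro i
    set m : ℝ := (i : ℝ) + a + 1 with hmdef
    have hi0 : (0 : ℝ) ≤ (i : ℝ) := Nat.cast_nonneg i
    have hm2 : (2 : ℝ) ≤ m := by rw [hmdef]; linarith
    have hm1 : (1 : ℝ) ≤ m := by linarith
    have hm0 : (0 : ℝ) < m := by linarith
    have hm10 : (0 : ℝ) < m - 1 := by linarith
    have hmp : 0 < m - p := by linarith
    have hBpos : (0 : ℝ) < m ^ p := Real.rpow_pos_of_pos hm0 p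
    have hApos : (0 : ℝ) < (m - 1) ^ p := Real.rpow_pos_of_pos hm10 p
    have key := bern_key (p := p) hp0.le hp1 hm1
    have key' : (m - 1) ^ p ≤ m ^ p * (m - p) / m := by
      rw [Real.rpow_sub hm0, Real.rpow_one] at key
      calc (m - 1) ^ p ≤ m ^ p / m * (m - p) := key
        _ = m ^ p * (m - p) / m := by ring
    have e1 : m ^ (-δ) = (m ^ p * m)⁻¹ := by
      rw [Real.rpow_neg hm0.le]
      congr 1
      have e : δ = p + 1 := by rw [hp]; ring
      rw [e, Real.rpow_add hm0, Real.rpow_one]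
    have e2 : m ^ (1 - δ) = (m ^ p)⁻¹ := by
      have e : (1 : ℝ) - δ = -p := by rw [hp]; ring
      rw [e, Real.rpow_neg hm0.le]
    have e3 : (m - 1) ^ (1 - δ) = ((m - 1) ^ p)⁻¹ := by
      have e : (1 : ℝ) - δ = -p := by rw [hp]; ring
      rw [e, Real.rpow_neg hm10.le]
    have hma : (i : ℝ) + (a : ℝ) = m - 1 := by rw [hmdef]; ring
    rw [hma, e1, e2, e3, le_div_iff₀ hdpos]
    have hinv : m / (m ^ p * (m - p)) ≤ 1 / ((m - 1) ^ p) := by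
      rw [div_le_div_iff₀ (by positivity) hApos, one_mul]
      calc m * (m - 1) ^ p ≤ m * (m ^ p * (m - p) / m) :=
            mul_le_mul_of_nonneg_left key' hm0.le
        _ = m ^ p * (m - p) := by field_simp
    have ineq : (p + m) / (m ^ p * m) ≤ m / (m ^ p * (m - p)) := by
      rw [div_le_div_iff₀ (by positivity) (by positivity)]
      nlinarith [mul_nonneg hBpos.le (sq_nonneg p)]
    have main : (m ^ p * m)⁻¹ * (δ - 1) + (m ^ p)⁻¹ ≤ ((m - 1) ^ p)⁻¹ := by
      calc (m ^ p * m)⁻¹ * (δ - 1) + (m ^ p)⁻¹ = (p + m) / (m ^ p * m) := by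
            rw [← hp]
            field_simp
        _ ≤ m / (m ^ p * (m - p)) := ineq
        _ ≤ 1 / ((m - 1) ^ p) := hinv
        _ = ((m - 1) ^ p)⁻¹ := one_div _
    linarith [main]
  -- sum the telescoping bound
  apply Real.tsum_le_of_sum_range_le (fun i => Real.rpow_nonneg (by positivity) _)
  intro n
  calc ∑ i ∈ range n, ((i : ℝ) + a + 1) ^ (-δ)
      ≤ ∑ i ∈ range n, (((i : ℝ) + a) ^ (1 - δ) - ((i : ℝ) + a + 1) ^ (1 - δ)) / (δ - 1) :=
        Finset.sum_le_sum fun i _ => term i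
    _ = (∑ i ∈ range n, (((i : ℝ) + a) ^ (1 - δ) - (((i : ℝ) + 1) + a) ^ (1 - δ))) / (δ - 1) := by
        rw [← Finset.sum_div]
        congr 1
        apply Finset.sum_congr rfl
        intro i _
        congr 2
        ring
    _ = (((0 : ℕ) + (a : ℝ)) ^ (1 - δ) - ((n : ℝ) + a) ^ (1 - δ)) / (δ - 1) := by
        congr 1
        have h := Finset.sum_range_sub' (f := fun i : ℕ => ((i : ℝ) + a) ^ (1 - δ)) n
        push_cast at h ⊢
        convert h using 2
    _ ≤ (a : ℝ) ^ (1 - δ) / (δ - 1) := by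
        have hX : (0 : ℝ) ≤ ((n : ℝ) + a) ^ (1 - δ) := Real.rpow_nonneg (by positivity) _
        have : (((0 : ℕ) : ℝ) + (a : ℝ)) ^ (1 - δ) = (a : ℝ) ^ (1 - δ) := by
          norm_num
        rw [this]
        gcongr
        linarith

theorem stmt_4 (γ : ℝ) (hγ₁ : 1 / 2 < γ) (hγ₂ : γ < 1) :
    ∃ C : ℝ, 0 < C ∧ ∀ a b : ℕ, 0 < a → 0 < b →
      ∑' x : ℕ, ((x + 1 : ℕ) : ℝ) ^ (-γ) * ((x + 1 + a : ℕ) : ℝ) ^ (-γ) *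
          ((x + 1 + b : ℕ) : ℝ) ^ (1 - 2 * γ)
        ≤ C * ((a * b : ℕ) : ℝ) ^ (1 - 2 * γ) := by
  have hγ0 : 0 < γ := by linarith
  have h1γ : (0:ℝ) < 1 - γ := by linarith
  have h2γ : (0:ℝ) < 2 * γ - 1 := by linarith
  refine ⟨1 / (1 - γ) + 1 / (2 * γ - 1), by positivity, ?_⟩
  intro a b ha hb
  have ha1 : (1 : ℝ) ≤ (a : ℝ) := by exact_mod_cast ha
  have hb1 : (1 : ℝ) ≤ (b : ℝ) := by exact_mod_cast hb
  set g : ℕ → ℝ := fun x => ((x + 1 : ℕ) : ℝ) ^ (-γ) * ((x + 1 + a : ℕ) : ℝ) ^ (-γ) *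
    ((x + 1 + b : ℕ) : ℝ) ^ (1 - 2 * γ) with hg_def
  have hg_nonneg : ∀ x, 0 ≤ g x := by
    intro x
    apply mul_nonneg (mul_nonneg (Real.rpow_nonneg (by positivity) _)
      (Real.rpow_nonneg (by positivity) _)) (Real.rpow_nonneg (by positivity) _)
  -- dominating function
  have hdom : ∀ x : ℕ, g x ≤ ((x : ℝ) + 1) ^ (-(2 * γ)) := by
    intro x
    have hx1 : (0:ℝ) < (x : ℝ) + 1 := by positivity
    have e1 : ((x + 1 + a : ℕ) : ℝ) ^ (-γ) ≤ ((x : ℝ) + 1) ^ (-γ) := by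
      apply Real.rpow_le_rpow_of_nonpos hx1 (by push_cast; linarith) (by linarith)
    have e2 : ((x + 1 + b : ℕ) : ℝ) ^ (1 - 2 * γ) ≤ 1 := by
      apply Real.rpow_le_one_of_one_le_of_nonpos (by push_cast; linarith) (by linarith)
    have e0 : ((x + 1 : ℕ) : ℝ) ^ (-γ) = ((x : ℝ) + 1) ^ (-γ) := by push_cast; ring_nf
    calc g x ≤ ((x + 1 : ℕ) : ℝ) ^ (-γ) * ((x : ℝ) + 1) ^ (-γ) * 1 := by
          apply mul_le_mul (mul_le_mul_of_nonneg_left e1 (Real.rpow_nonneg (by positivity) _))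
            e2 (Real.rpow_nonneg (by positivity) _)
          positivity
      _ = ((x : ℝ) + 1) ^ (-γ) * ((x : ℝ) + 1) ^ (-γ) := by rw [e0, mul_one]
      _ = ((x : ℝ) + 1) ^ (-(2 * γ)) := by
          rw [← Real.rpow_add hx1]; congr 1; ring
  have hsum_dom : Summable (fun x : ℕ => ((x : ℝ) + 1) ^ (-(2 * γ))) := by
    have h := (Real.summable_nat_rpow (p := -(2 * γ))).2 (by linarith)
    have h2 := (summable_nat_add_iff 1).2 h
    apply h2.congr
    intro i
    push_cast
    ring_nf
  have hg : Summable g :=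
    Summable.of_nonneg_of_le hg_nonneg hdom hsum_dom
  -- split the sum at a
  have hsplit := Summable.sum_add_tsum_nat_add a hg
  rw [← hsplit]
  -- head estimate
  have head : ∑ i ∈ range a, g i
      ≤ ((a : ℝ) ^ (1 - γ) / (1 - γ)) * ((a : ℝ) ^ (-γ) * (b : ℝ) ^ (1 - 2 * γ)) := by
    have step : ∀ i ∈ range a, g i ≤ ((i : ℝ) + 1) ^ (-γ) * ((a : ℝ) ^ (-γ) * (b : ℝ) ^ (1 - 2 * γ)) := by
      intro i _
      have e1 : ((i + 1 + a : ℕ) : ℝ) ^ (-γ) ≤ (a : ℝ) ^ (-γ) :=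
        Real.rpow_le_rpow_of_nonpos (by positivity) (by push_cast; linarith) (by linarith)
      have e2 : ((i + 1 + b : ℕ) : ℝ) ^ (1 - 2 * γ) ≤ (b : ℝ) ^ (1 - 2 * γ) :=
        Real.rpow_le_rpow_of_nonpos (by positivity) (by push_cast; linarith) (by linarith)
      have e0 : ((i + 1 : ℕ) : ℝ) ^ (-γ) = ((i : ℝ) + 1) ^ (-γ) := by push_cast; ring_nf
      calc g i = ((i + 1 : ℕ) : ℝ) ^ (-γ) * (((i + 1 + a : ℕ) : ℝ) ^ (-γ) *
            ((i + 1 + b : ℕ) : ℝ) ^ (1 - 2 * γ)) := by rw [hg_def]; ring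
        _ ≤ ((i + 1 : ℕ) : ℝ) ^ (-γ) * ((a : ℝ) ^ (-γ) * (b : ℝ) ^ (1 - 2 * γ)) := by
            apply mul_le_mul_of_nonneg_left _ (Real.rpow_nonneg (by positivity) _)
            apply mul_le_mul e1 e2 (Real.rpow_nonneg (by positivity) _)
              (Real.rpow_nonneg (by positivity) _)
        _ = ((i : ℝ) + 1) ^ (-γ) * ((a : ℝ) ^ (-γ) * (b : ℝ) ^ (1 - 2 * γ)) := by rw [e0]
    calc ∑ i ∈ range a, g i
        ≤ ∑ i ∈ range a, ((i : ℝ) + 1) ^ (-γ) * ((a : ℝ) ^ (-γ) * (b : ℝ) ^ (1 - 2 * γ)) :=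
          Finset.sum_le_sum step
      _ = (∑ i ∈ range a, ((i : ℝ) + 1) ^ (-γ)) * ((a : ℝ) ^ (-γ) * (b : ℝ) ^ (1 - 2 * γ)) :=
          (Finset.sum_mul _ _ _).symm
      _ ≤ ((a : ℝ) ^ (1 - γ) / (1 - γ)) * ((a : ℝ) ^ (-γ) * (b : ℝ) ^ (1 - 2 * γ)) := by
          apply mul_le_mul_of_nonneg_right (head_sum hγ0 hγ₂ a)
          positivity
  -- tail estimate
  have tail : ∑' i : ℕ, g (i + a)
      ≤ ((a : ℝ) ^ (1 - 2 * γ) / (2 * γ - 1)) * (b : ℝ) ^ (1 - 2 * γ) := by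
    have step : ∀ i : ℕ, g (i + a) ≤ ((i : ℝ) + a + 1) ^ (-(2 * γ)) * (b : ℝ) ^ (1 - 2 * γ) := by
      intro i
      have hx : (0:ℝ) < (i : ℝ) + a + 1 := by positivity
      have e0 : ((i + a + 1 : ℕ) : ℝ) ^ (-γ) = ((i : ℝ) + a + 1) ^ (-γ) := by push_cast; ring_nf
      have e1 : ((i + a + 1 + a : ℕ) : ℝ) ^ (-γ) ≤ ((i : ℝ) + a + 1) ^ (-γ) :=
        Real.rpow_le_rpow_of_nonpos hx (by push_cast; linarith) (by linarith)
      have e2 : ((i + a + 1 + b : ℕ) : ℝ) ^ (1 - 2 * γ) ≤ (b : ℝ) ^ (1 - 2 * γ) :=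
        Real.rpow_le_rpow_of_nonpos (by positivity) (by push_cast; linarith) (by linarith)
      calc g (i + a) = ((i + a + 1 : ℕ) : ℝ) ^ (-γ) * ((i + a + 1 + a : ℕ) : ℝ) ^ (-γ) *
            ((i + a + 1 + b : ℕ) : ℝ) ^ (1 - 2 * γ) := by rw [hg_def]
        _ ≤ ((i : ℝ) + a + 1) ^ (-γ) * ((i : ℝ) + a + 1) ^ (-γ) * (b : ℝ) ^ (1 - 2 * γ) := by
            apply mul_le_mul _ e2 (Real.rpow_nonneg (by positivity) _) (by positivity)
            rw [e0]
            exact mul_le_mul_of_nonneg_left e1 (Real.rpow_nonneg hx.le _)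
        _ = ((i : ℝ) + a + 1) ^ (-(2 * γ)) * (b : ℝ) ^ (1 - 2 * γ) := by
            rw [← Real.rpow_add hx]; congr 2; ring
    have hsum_rhs : Summable (fun i : ℕ => ((i : ℝ) + a + 1) ^ (-(2 * γ)) * (b : ℝ) ^ (1 - 2 * γ)) := by
      apply Summable.mul_right
      have h := (Real.summable_nat_rpow (p := -(2 * γ))).2 (by linarith)
      have h2 := (summable_nat_add_iff (a + 1)).2 h
      apply h2.congr
      intro i
      push_cast
      ring_nf
    have hsum_lhs : Summable (fun i : ℕ => g (i + a)) := (summable_nat_add_iff a).2 hg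
    calc ∑' i : ℕ, g (i + a)
        ≤ ∑' i : ℕ, ((i : ℝ) + a + 1) ^ (-(2 * γ)) * (b : ℝ) ^ (1 - 2 * γ) :=
          Summable.tsum_le_tsum step hsum_lhs hsum_rhs
      _ = (∑' i : ℕ, ((i : ℝ) + a + 1) ^ (-(2 * γ))) * (b : ℝ) ^ (1 - 2 * γ) :=
          tsum_mul_right
      _ ≤ ((a : ℝ) ^ (1 - 2 * γ) / (2 * γ - 1)) * (b : ℝ) ^ (1 - 2 * γ) := by
          apply mul_le_mul_of_nonneg_right _ (Real.rpow_nonneg (by positivity) _)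
          have h := tail_sum (δ := 2 * γ) (by linarith) (by linarith) ha
          convert h using 2 <;> ring
  -- combine
  have hA : (0:ℝ) < (a:ℝ) := by linarith
  have haa : (a : ℝ) ^ (1 - γ) * (a : ℝ) ^ (-γ) = (a : ℝ) ^ (1 - 2 * γ) := by
    rw [← Real.rpow_add hA]; congr 1; ring
  have hab : ((a * b : ℕ) : ℝ) ^ (1 - 2 * γ) = (a : ℝ) ^ (1 - 2 * γ) * (b : ℝ) ^ (1 - 2 * γ) := by
    push_cast
    exact Real.mul_rpow (by positivity) (by positivity)
  rw [hab]
  have hhead' : ((a : ℝ) ^ (1 - γ) / (1 - γ)) * ((a : ℝ) ^ (-γ) * (b : ℝ) ^ (1 - 2 * γ))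
      = (1 / (1 - γ)) * ((a : ℝ) ^ (1 - 2 * γ) * (b : ℝ) ^ (1 - 2 * γ)) := by
    rw [← haa]; ring
  have htail' : ((a : ℝ) ^ (1 - 2 * γ) / (2 * γ - 1)) * (b : ℝ) ^ (1 - 2 * γ)
      = (1 / (2 * γ - 1)) * ((a : ℝ) ^ (1 - 2 * γ) * (b : ℝ) ^ (1 - 2 * γ)) := by
    ring
  calc ∑ i ∈ range a, g i + ∑' i : ℕ, g (i + a)
      ≤ (1 / (1 - γ)) * ((a : ℝ) ^ (1 - 2 * γ) * (b : ℝ) ^ (1 - 2 * γ))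
        + (1 / (2 * γ - 1)) * ((a : ℝ) ^ (1 - 2 * γ) * (b : ℝ) ^ (1 - 2 * γ)) := by
        rw [← hhead', ← htail']; exact add_le_add head tail
    _ = (1 / (1 - γ) + 1 / (2 * γ - 1)) * ((a : ℝ) ^ (1 - 2 * γ) * (b : ℝ) ^ (1 - 2 * γ)) := by
        ring
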